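/- Let u_h → u uniformly on ℝⁿ, where each u_h ∈ BV(ℝⁿ) is nonnegative, supported in a fixed compact set K ⊂ Ω, and satisfies the outward minimality property ∫|Du_h| ≤ ∫|Dv| for all v ∈ BV(ℝⁿ) with v ≥ u_h and v = 0 on ℝⁿ ∖ Ω, and u ∈ BV(ℝⁿ) is continuous with support in K. Then limsup_{h↓0} ∫|Du_h| ≤ ∫|Du|, and hence by lower semicontinuity ∫|Du_h| → ∫|Du|. -/

import Mathlib

open MeasureTheory ENNReal Set Filter Bornology Topology

noncomputable section

abbrev Euc (n : ℕ) := EuclideanSpace ℝ (Fin n)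

variable {n : ℕ}

/-- Divergence of a vector field on `ℝⁿ`. -/
def diverg (ξ : Euc n → Euc n) (x : Euc n) : ℝ :=
  ∑ i, fderiv ℝ ξ x (EuclideanSpace.single i 1) i

/-- Admissible test vector fields: `C¹`, compactly supported, bounded by one. -/
def testVF (n : ℕ) : Set (Euc n → Euc n) :=
  {ξ | ContDiff ℝ 1 ξ ∧ HasCompactSupport ξ ∧ ∀ x, ‖ξ x‖ ≤ 1}

/-- De Giorgi perimeter of a set in `ℝⁿ`. -/
def perimeter (E : Set (Euc n)) : ℝ≥0∞ :=
  ⨆ ξ ∈ testVF n, ENNReal.ofReal (∫ x in E, diverg ξ x)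

/-- Total variation of a function on `ℝⁿ`. -/
def totalVariation (u : Euc n → ℝ) : ℝ≥0∞ :=
  ⨆ ξ ∈ testVF n, ENNReal.ofReal (∫ x, u x * diverg ξ x)

/-- `E` is outward minimizing in `Ω`. -/
def OutwardMinimizing (Ω E : Set (Euc n)) : Prop :=
  ∀ F : Set (Euc n), MeasurableSet F → E ⊆ F → F ⊆ Ω → perimeter E ≤ perimeter F

/-- Distance to the topological boundary of `F`. -/
def bdist (F : Set (Euc n)) (x : Euc n) : ℝ := Metric.infDist x (frontier F)

/-- Signed distance to the boundary of `F`: negative inside `F`, positive outside. -/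
def sdist (F : Set (Euc n)) (x : Euc n) : ℝ :=
  haveI := Classical.dec (x ∈ F)
  if x ∈ F then -(bdist F x) else bdist F x

/-- The Almgren–Taylor–Wang functional `F_h(E, F) = P(E) + (1/h) ∫_{E Δ F} d_F`. -/
def ATW (h : ℝ) (E F : Set (Euc n)) : ℝ≥0∞ :=
  perimeter E + ENNReal.ofReal (1 / h) * ∫⁻ x in symmDiff E F, ENNReal.ofReal (bdist F x)

/-! ### Auxiliary lemmas -/

/-- Integral of the divergence of a `C¹` compactly supported vector field vanishes. -/
lemma integral_diverg_eq_zero (Φ : Euc n → Euc n)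
    (hΦ : ContDiff ℝ 1 Φ) (hs : HasCompactSupport Φ) :
    ∫ x, diverg Φ x = 0 := by
  cases n with
  | zero => simp [diverg]
  | succ m =>
    set L : Euc (m+1) ≃L[ℝ] (Fin (m+1) → ℝ) := EuclideanSpace.equiv (Fin (m+1)) ℝ with hL
    set Ψ : (Fin (m+1) → ℝ) → (Fin (m+1) → ℝ) := ⇑L ∘ Φ ∘ ⇑L.symm with hΨdef
    have hΨ : ContDiff ℝ 1 Ψ := L.toContinuousLinearMap.contDiff.comp
      (hΦ.comp L.symm.toContinuousLinearMap.contDiff)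
    have hΨs : HasCompactSupport Ψ :=
      (hs.comp_homeomorph L.symm.toHomeomorph).comp_left (map_zero L)
    have hfd : ∀ y, fderiv ℝ Ψ y =
        ((L : Euc (m+1) →L[ℝ] (Fin (m+1) → ℝ)).comp (fderiv ℝ Φ (L.symm y))).comp
          (L.symm : (Fin (m+1) → ℝ) →L[ℝ] Euc (m+1)) := by
      intro y
      have h1 : DifferentiableAt ℝ Φ (L.symm y) := (hΦ.differentiable one_ne_zero) _
      rw [hΨdef]
      rw [show ⇑L ∘ Φ ∘ ⇑L.symm = ⇑L ∘ (Φ ∘ ⇑L.symm) from rfl]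
      rw [fderiv_comp y (L.differentiableAt) ((h1.comp y (L.symm.differentiableAt)))]
      rw [fderiv_comp y h1 (L.symm.differentiableAt)]
      simp [ContinuousLinearEquiv.fderiv]
      rfl
    have hkey : ∀ y, (∑ i, fderiv ℝ Ψ y (Pi.single i 1) i) = diverg Φ (L.symm y) := by
      intro y
      rw [hfd]
      simp only [ContinuousLinearMap.comp_apply, diverg]
      rfl
    have e := EuclideanSpace.volume_preserving_symm_measurableEquiv_toLp (Fin (m+1))
    have htrans : ∫ x, diverg Φ x = ∫ y, diverg Φ (L.symm y) := by
      have := (e.symm (MeasurableEquiv.toLp 2 (Fin (m+1) → ℝ)).symm).integral_comp' (diverg Φ)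
      rw [← this]
      rfl
    rw [htrans]
    simp_rw [← hkey]
    obtain ⟨R, hR, hRs⟩ := hΨs.isBounded.subset_ball_lt 0 0
    set a : Fin (m+1) → ℝ := fun _ => -R with ha
    set b : Fin (m+1) → ℝ := fun _ => R with hb
    have hle : a ≤ b := fun i => by simp [ha, hb]; linarith
    have hout : ∀ y : Fin (m+1) → ℝ, y ∉ Icc a b → y ∉ tsupport Ψ := by
      intro y hy hyt
      apply hy
      rw [Set.mem_Icc]
      have h1 : ‖y‖ < R := by
        have := hRs hyt
        simpa [Metric.mem_ball] using this
      refine ⟨fun i => ?_, fun i => ?_⟩ <;>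
      · have h2 : |y i| ≤ ‖y‖ := by
          simpa using norm_le_pi_norm y i
        rw [abs_le] at h2
        simp only [ha, hb]
        linarith [h2.1, h2.2]
    have hzero : ∀ y : Fin (m+1) → ℝ, y ∉ Icc a b →
        (∑ i, fderiv ℝ Ψ y (Pi.single i 1) i) = 0 := by
      intro y hy
      have : fderiv ℝ Ψ y = 0 := by
        by_contra h
        exact hout y hy (support_fderiv_subset ℝ h)
      simp [this]
    rw [← setIntegral_eq_integral_of_forall_compl_eq_zero hzero]
    have hdivcont : Continuous fun y => ∑ i, fderiv ℝ Ψ y (Pi.single i 1) i :=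
      continuous_finset_sum _ fun i _ =>
        (continuous_apply i).comp ((hΨ.continuous_fderiv one_ne_zero).clm_apply continuous_const)
    rw [integral_divergence_of_hasFDerivAt_off_countable a b hle Ψ
      (fderiv ℝ Ψ) ∅ countable_empty hΨ.continuous.continuousOn
      (fun x _ => (hΨ.differentiable one_ne_zero x).hasFDerivAt)
      (hdivcont.continuousOn.integrableOn_compact isCompact_Icc)]
    apply Finset.sum_eq_zero
    intro i _
    have hface : ∀ (c : ℝ), |c| = R → ∀ x : Fin m → ℝ, Ψ (i.insertNth c x) = 0 := by
      intro c hc x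
      set y : Fin (m+1) → ℝ := i.insertNth c x with hy
      apply image_eq_zero_of_notMem_tsupport
      intro hmem
      have h3 := hRs hmem
      simp only [Metric.mem_ball, dist_zero_right] at h3
      have h2 : |y i| ≤ ‖y‖ := by
        simpa using norm_le_pi_norm y i
      rw [hy, Fin.insertNth_apply_same, hc] at h2
      rw [← hy] at h2
      linarith
    have h1 : ∀ x : Fin m → ℝ, Ψ (i.insertNth (b i) x) i = 0 := by
      intro x; rw [hface R (by rw [abs_of_pos hR]) x]; rfl
    have h2 : ∀ x : Fin m → ℝ, Ψ (i.insertNth (a i) x) i = 0 := by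
      intro x; rw [hface (-R) (by rw [abs_of_neg (by linarith)]; ring) x]; rfl
    simp [h1, h2]

lemma euc_decomp (v : Euc n) : v = ∑ i, v i • EuclideanSpace.single i 1 := by
  ext j
  have : (∑ i, v i • EuclideanSpace.single i 1 : Euc n) j
      = ∑ i, (v i • (EuclideanSpace.single i 1 : Euc n)) j := by
    rw [WithLp.ofLp_sum]; exact Finset.sum_apply j Finset.univ _
  rw [this]
  simp [EuclideanSpace.single_apply]

lemma clm_apply_eq_sum (D : Euc n →L[ℝ] ℝ) (v : Euc n) :
    D v = ∑ i, D (EuclideanSpace.single i 1) * v i := by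
  conv_lhs => rw [euc_decomp v]
  rw [map_sum]
  congr 1; ext i
  rw [D.map_smul]
  simp [mul_comm]

lemma diverg_continuous {ξ : Euc n → Euc n} (hξ : ContDiff ℝ 1 ξ) :
    Continuous (diverg ξ) :=
  continuous_finset_sum _ fun i _ =>
    (continuous_apply i).comp ((PiLp.continuous_ofLp (p := 2) (β := fun _ : Fin n => ℝ)).comp
      ((hξ.continuous_fderiv one_ne_zero).clm_apply continuous_const))

lemma diverg_hasCompactSupport {ξ : Euc n → Euc n} (hξ : HasCompactSupport ξ) :
    HasCompactSupport (diverg ξ) := by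
  apply (hξ.fderiv ℝ).mono
  intro x hx
  simp only [Function.mem_support] at hx ⊢
  intro h
  apply hx
  unfold diverg
  rw [h]
  simp

lemma diverg_smul {g : Euc n → ℝ} {ξ : Euc n → Euc n}
    (hg : ContDiff ℝ 1 g) (hξ : ContDiff ℝ 1 ξ) (x : Euc n) :
    diverg (fun y => g y • ξ y) x = g x * diverg ξ x + fderiv ℝ g x (ξ x) := by
  have hDg : DifferentiableAt ℝ g x := hg.differentiable one_ne_zero x
  have hDξ : DifferentiableAt ℝ ξ x := hξ.differentiable one_ne_zero x
  unfold diverg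
  rw [fderiv_fun_smul hDg hDξ]
  have hterm : ∀ i : Fin n,
      ((g x • (fderiv ℝ ξ x) (EuclideanSpace.single i 1)
        + (fderiv ℝ g x) (EuclideanSpace.single i 1) • ξ x : Euc n)) i
      = g x * (fderiv ℝ ξ x) (EuclideanSpace.single i 1) i
        + (fderiv ℝ g x) (EuclideanSpace.single i 1) * ξ x i := fun i => rfl
  simp only [ContinuousLinearMap.add_apply, ContinuousLinearMap.coe_smul',
    Pi.smul_apply, ContinuousLinearMap.smulRight_apply, hterm]
  rw [Finset.sum_add_distrib, ← Finset.mul_sum]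
  congr 1
  rw [clm_apply_eq_sum (fderiv ℝ g x) (ξ x)]

/-- Total variation of a `C¹` compactly supported function is at most `∫ ‖∇g‖`. -/
lemma tv_smooth_le (g : Euc n → ℝ) (hg : ContDiff ℝ 1 g) (hgs : HasCompactSupport g) :
    totalVariation g ≤ ENNReal.ofReal (∫ x, ‖fderiv ℝ g x‖) := by
  refine iSup₂_le fun ξ hξ => ?_
  obtain ⟨hξ1, hξ2, hξ3⟩ := hξ
  have hΦ : ContDiff ℝ 1 (fun y => g y • ξ y) := hg.smul hξ1
  have hΦs : HasCompactSupport (fun y => g y • ξ y) := hgs.smul_right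
  have h0 := integral_diverg_eq_zero _ hΦ hΦs
  have hA : Integrable (fun x => g x * diverg ξ x) :=
    ((hg.continuous).mul (diverg_continuous hξ1)).integrable_of_hasCompactSupport
      hgs.mul_right
  have hBc : Continuous (fun x => fderiv ℝ g x (ξ x)) :=
    (hg.continuous_fderiv one_ne_zero).clm_apply hξ1.continuous
  have hBs : HasCompactSupport (fun x => fderiv ℝ g x (ξ x)) := by
    apply (hgs.fderiv ℝ).mono
    intro x hx
    simp only [Function.mem_support] at hx ⊢
    intro h
    exact hx (by rw [h]; simp)
  have hB : Integrable (fun x => fderiv ℝ g x (ξ x)) :=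
    hBc.integrable_of_hasCompactSupport hBs
  have hnorm : Integrable (fun x => ‖fderiv ℝ g x‖) :=
    ((hg.continuous_fderiv one_ne_zero).norm).integrable_of_hasCompactSupport (hgs.fderiv ℝ).norm
  have hintegral : ∫ x, g x * diverg ξ x = - ∫ x, fderiv ℝ g x (ξ x) := by
    have h1 : ∫ x, diverg (fun y => g y • ξ y) x
        = (∫ x, g x * diverg ξ x) + ∫ x, fderiv ℝ g x (ξ x) := by
      rw [← integral_add hA hB]
      exact integral_congr_ae (Filter.Eventually.of_forall fun x => diverg_smul hg hξ1 x)
    rw [h0] at h1; linarith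
  rw [hintegral]
  apply ENNReal.ofReal_le_ofReal
  rw [← integral_neg]
  apply integral_mono hB.neg hnorm
  intro x
  have h1 := (fderiv ℝ g x).le_opNorm (ξ x)
  have h2 : ‖fderiv ℝ g x (ξ x)‖ ≤ ‖fderiv ℝ g x‖ := by
    refine h1.trans ?_
    nlinarith [hξ3 x, norm_nonneg (fderiv ℝ g x), norm_nonneg (ξ x)]
  simp only [Pi.neg_apply]
  calc -(fderiv ℝ g x (ξ x)) ≤ ‖fderiv ℝ g x (ξ x)‖ := neg_le_abs _
  _ ≤ ‖fderiv ℝ g x‖ := h2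

/-- A `C¹` cutoff which is `1` on `K` and vanishes outside `Ω`. -/
lemma exists_cutoff (Ω K : Set (Euc n)) (hΩo : IsOpen Ω) (hK : IsCompact K) (hKΩ : K ⊆ Ω) :
    ∃ η : Euc n → ℝ, ContDiff ℝ 1 η ∧ HasCompactSupport η ∧ (∀ x ∈ K, η x = 1) ∧
      (∀ x ∉ Ω, η x = 0) ∧ (∀ x, 0 ≤ η x) := by
  obtain ⟨δ, hδ0, hδΩ⟩ := hK.exists_cthickening_subset_open hΩo hKΩ
  have htc : IsCompact (Metric.cthickening δ K) := hK.cthickening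
  have hKt : K ⊆ interior (Metric.cthickening δ K) :=
    (Metric.self_subset_thickening hδ0 K).trans
      (interior_maximal (Metric.thickening_subset_cthickening δ K) Metric.isOpen_thickening)
  obtain ⟨f, hf1, hf0, hf01⟩ :=
    exists_contMDiffMap_one_nhds_of_subset_interior (modelWithCornersSelf ℝ (Euc n)) (n := 1) hK.isClosed hKt
  refine ⟨f, ?_, ?_, ?_, ?_, ?_⟩
  · exact (contMDiff_iff_contDiff.mp f.contMDiff).of_le (by norm_cast)
  · exact HasCompactSupport.intro htc hf0
  · exact hf1.self_of_nhdsSet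
  · exact fun x hx => hf0 x (fun h => hx (hδΩ h))
  · exact fun x => (hf01 x).1

/-- Convergence of total variations for the arrival times: uniform convergence
of the outward minimizing functions `u_h` to a continuous `BV` function `u`
implies `limsup ∫|Du_h| ≤ ∫|Du|` and hence `∫|Du_h| → ∫|Du|`. -/
theorem totalVariation_convergence (Ω K : Set (Euc n))
    (hΩo : IsOpen Ω) (hΩb : IsBounded Ω) (hK : IsCompact K) (hKΩ : K ⊆ Ω)
    (u : ℝ → Euc n → ℝ) (v : Euc n → ℝ)
    (humeas : ∀ h > (0 : ℝ), Measurable (u h))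
    (hunn : ∀ h > (0 : ℝ), ∀ x, 0 ≤ u h x)
    (husupp : ∀ h > (0 : ℝ), ∀ x ∉ K, u h x = 0)
    (huInt : ∀ h > (0 : ℝ), Integrable (u h))
    (huTV : ∀ h > (0 : ℝ), totalVariation (u h) < ⊤)
    (homin : ∀ h > (0 : ℝ), ∀ w : Euc n → ℝ, Measurable w → Integrable w →
      totalVariation w < ⊤ → (∀ x, u h x ≤ w x) → (∀ x ∉ Ω, w x = 0) →
      totalVariation (u h) ≤ totalVariation w)
    (hv : Continuous v) (hvsupp : ∀ x ∉ K, v x = 0)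
    (hvInt : Integrable v) (hvTV : totalVariation v < ⊤)
    (hconv : TendstoUniformly u v (𝓝[>] (0 : ℝ))) :
    limsup (fun h => totalVariation (u h)) (𝓝[>] (0 : ℝ)) ≤ totalVariation v ∧
    Tendsto (fun h => totalVariation (u h)) (𝓝[>] (0 : ℝ))
      (𝓝 (totalVariation v)) := by
  obtain ⟨η, hη1, hηs, hηK, hηΩ, hηnn⟩ := exists_cutoff Ω K hΩo hK hKΩ
  set C : ℝ := ∫ x, ‖fderiv ℝ η x‖ with hCdef
  have hC0 : 0 ≤ C := integral_nonneg fun x => norm_nonneg _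
  have hTVη : totalVariation η ≤ ENNReal.ofReal C := tv_smooth_le η hη1 hηs
  have hηcont : Continuous η := hη1.continuous
  have hηint : Integrable η := hηcont.integrable_of_hasCompactSupport hηs
  -- total variation bound for v + ε η
  have hTVw : ∀ ε : ℝ, 0 ≤ ε → totalVariation (fun x => v x + ε * η x)
      ≤ totalVariation v + ENNReal.ofReal ε * ENNReal.ofReal C := by
    intro ε hε
    refine iSup₂_le fun ξ hξ => ?_
    have hdc : Continuous (diverg ξ) := diverg_continuous hξ.1
    have hdb : ∃ M, ∀ x, ‖diverg ξ x‖ ≤ M :=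
      (diverg_hasCompactSupport hξ.2.1).exists_bound_of_continuous hdc
    have h1 : Integrable (fun x => v x * diverg ξ x) := by
      simpa [mul_comm] using hvInt.bdd_mul hdc.aestronglyMeasurable (Filter.Eventually.of_forall hdb.choose_spec)
    have h2 : Integrable (fun x => η x * diverg ξ x) :=
      (hηcont.mul hdc).integrable_of_hasCompactSupport hηs.mul_right
    have hsplit : ∫ x, (v x + ε * η x) * diverg ξ x
        = (∫ x, v x * diverg ξ x) + ε * ∫ x, η x * diverg ξ x := by
      have heq : ∀ x, (v x + ε * η x) * diverg ξ x
          = v x * diverg ξ x + ε * (η x * diverg ξ x) := fun x => by ring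
      simp_rw [heq]
      rw [integral_add h1 (h2.const_mul ε), integral_const_mul]
    rw [hsplit]
    calc ENNReal.ofReal ((∫ x, v x * diverg ξ x) + ε * ∫ x, η x * diverg ξ x)
        ≤ ENNReal.ofReal (∫ x, v x * diverg ξ x)
          + ENNReal.ofReal (ε * ∫ x, η x * diverg ξ x) := ENNReal.ofReal_add_le
      _ = ENNReal.ofReal (∫ x, v x * diverg ξ x)
          + ENNReal.ofReal ε * ENNReal.ofReal (∫ x, η x * diverg ξ x) := by
            rw [ENNReal.ofReal_mul hε]
      _ ≤ totalVariation v + ENNReal.ofReal ε * ENNReal.ofReal C := by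
            apply add_le_add
            · exact le_iSup₂_of_le ξ hξ le_rfl
            · exact mul_le_mul_right ((le_iSup₂_of_le ξ hξ le_rfl).trans hTVη) _
  -- eventual comparison
  have hev : ∀ ε : ℝ, 0 < ε → ∀ᶠ h in 𝓝[>] (0:ℝ), totalVariation (u h)
      ≤ totalVariation v + ENNReal.ofReal ε * ENNReal.ofReal C := by
    intro ε hε
    filter_upwards [Metric.tendstoUniformly_iff.mp hconv ε hε, self_mem_nhdsWithin]
      with h hh hmem
    have hpos : (0:ℝ) < h := hmem
    have hwfin : totalVariation (fun x => v x + ε * η x) < ⊤ :=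
      lt_of_le_of_lt (hTVw ε hε.le)
        (ENNReal.add_lt_top.mpr ⟨hvTV, ENNReal.mul_lt_top ENNReal.ofReal_lt_top
          ENNReal.ofReal_lt_top⟩)
    refine le_trans (homin h hpos _ ?_ ?_ hwfin ?_ ?_) (hTVw ε hε.le)
    · exact (hv.add (continuous_const.mul hηcont)).measurable
    · exact hvInt.add (hηint.const_mul ε)
    · intro x
      by_cases hx : x ∈ K
      · have hd := hh x
        rw [Real.dist_eq, abs_lt] at hd
        have hη1x : η x = 1 := hηK x hx
        rw [hη1x]
        linarith [hd.1, hd.2]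
      · have h0 : u h x = 0 := husupp h hpos x hx
        have hv0 : v x = 0 := hvsupp x hx
        rw [h0, hv0]
        have := hηnn x
        nlinarith
    · intro x hx
      rw [hvsupp x (fun hK' => hx (hKΩ hK')), hηΩ x hx]
      ring
  -- limsup bound
  have hlimsup : limsup (fun h => totalVariation (u h)) (𝓝[>] (0:ℝ)) ≤ totalVariation v := by
    apply ENNReal.le_of_forall_pos_le_add
    intro ε' hε' _
    set ε : ℝ := (ε' : ℝ) / (C + 1) with hεdef
    have hεpos : 0 < ε := div_pos (by exact_mod_cast hε') (by linarith)
    have h2 : ENNReal.ofReal ε * ENNReal.ofReal C ≤ (ε' : ℝ≥0∞) := by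
      rw [← ENNReal.ofReal_mul hεpos.le, ← ENNReal.ofReal_coe_nnreal]
      apply ENNReal.ofReal_le_ofReal
      rw [hεdef, div_mul_eq_mul_div, div_le_iff₀ (by linarith : (0:ℝ) < C + 1)]
      nlinarith [ε'.coe_nonneg]
    calc limsup (fun h => totalVariation (u h)) (𝓝[>] (0:ℝ))
        ≤ totalVariation v + ENNReal.ofReal ε * ENNReal.ofReal C :=
          limsup_le_of_le (by isBoundedDefault) (hev ε hεpos)
      _ ≤ totalVariation v + (ε' : ℝ≥0∞) := add_le_add_right h2 _
  -- liminf bound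
  have hliminf : totalVariation v
      ≤ liminf (fun h => totalVariation (u h)) (𝓝[>] (0:ℝ)) := by
    refine iSup₂_le fun ξ hξ => ?_
    have hdc : Continuous (diverg ξ) := diverg_continuous hξ.1
    have hds : HasCompactSupport (diverg ξ) := diverg_hasCompactSupport hξ.2.1
    obtain ⟨M, hM⟩ := hds.exists_bound_of_continuous hdc
    have hIint : Integrable (diverg ξ) := hdc.integrable_of_hasCompactSupport hds
    set I : ℝ := ∫ x, ‖diverg ξ x‖ with hIdef
    have hI0 : 0 ≤ I := integral_nonneg fun _ => norm_nonneg _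
    have htend : Tendsto (fun h => ∫ x, u h x * diverg ξ x) (𝓝[>] (0:ℝ))
        (𝓝 (∫ x, v x * diverg ξ x)) := by
      rw [Metric.tendsto_nhds]
      intro ε hε
      have hδ : (0:ℝ) < ε / (I + 1) := by positivity
      filter_upwards [Metric.tendstoUniformly_iff.mp hconv _ hδ, self_mem_nhdsWithin]
        with h hh hmem
      have hpos : (0:ℝ) < h := hmem
      have hu_int : Integrable (fun x => u h x * diverg ξ x) := by
        simpa [mul_comm] using (huInt h hpos).bdd_mul hdc.aestronglyMeasurable (Filter.Eventually.of_forall hM)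
      have hv_int : Integrable (fun x => v x * diverg ξ x) := by
        simpa [mul_comm] using hvInt.bdd_mul hdc.aestronglyMeasurable (Filter.Eventually.of_forall hM)
      rw [dist_eq_norm, ← integral_sub hu_int hv_int]
      have hb : ∀ x, ‖u h x * diverg ξ x - v x * diverg ξ x‖
          ≤ (ε/(I+1)) * ‖diverg ξ x‖ := by
        intro x
        rw [← sub_mul, norm_mul]
        apply mul_le_mul_of_nonneg_right _ (norm_nonneg _)
        have hd := hh x
        rw [Real.dist_eq, abs_sub_comm] at hd
        exact hd.le
      calc ‖∫ x, (u h x * diverg ξ x - v x * diverg ξ x)‖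
          ≤ ∫ x, (ε/(I+1)) * ‖diverg ξ x‖ :=
            norm_integral_le_of_norm_le (hIint.norm.const_mul _)
              (Filter.Eventually.of_forall hb)
        _ = (ε/(I+1)) * I := by rw [integral_const_mul]
        _ < ε := by
            rw [div_mul_eq_mul_div, div_lt_iff₀ (by linarith : (0:ℝ) < I + 1)]
            nlinarith
    have hlim := (ENNReal.tendsto_ofReal htend).liminf_eq
    rw [← hlim]
    apply liminf_le_liminf (Filter.Eventually.of_forall fun h => ?_)
    exact le_iSup₂_of_le ξ hξ le_rfl
  exact ⟨hlimsup, tendsto_of_le_liminf_of_limsup_le hliminf hlimsup⟩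

end
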